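/- Fix integers k ≥ 2 and S ≥ k and a real ε with 0 < ε ≤ S⁻². With x^(k)(j) = (j-1)(1+ε)/k for 1 ≤ j < k, x^(k)(k) = 1 - (1+ε)/k, and y^(k)(j) = x^(k)(j) + (1+ε)/k, the open intervals I^(k)(j) = (x^(k)(j), y^(k)(j)), for 1 ≤ j ≤ k, are pairwise disjoint except for the single pair I^(k)(k-1) and I^(k)(k). -/

import Mathlib

/-- Base point `x^(k)(j)` for `1 ≤ j ≤ k`. -/
noncomputable def xpt (ε : ℝ) (k j : ℕ) : ℝ :=
  if j < k then ((j : ℝ) - 1) * (1 + ε) / k else 1 - (1 + ε) / k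

/-- Upper point `y^(k)(j) = x^(k)(j) + (1+ε)/k`. -/
noncomputable def ypt (ε : ℝ) (k j : ℕ) : ℝ := xpt ε k j + (1 + ε) / k

lemma aux_disj (k : ℕ) (ε : ℝ) (hk : 2 ≤ k) (hε0 : 0 < ε)
    (hkε : (k : ℝ) * ε < 1) (i j : ℕ) (h1 : 1 ≤ i) (hij : i < j) (hjk : j ≤ k)
    (hne : ¬(i = k - 1 ∧ j = k)) :
    Disjoint (Set.Ioo (xpt ε k i) (ypt ε k i)) (Set.Ioo (xpt ε k j) (ypt ε k j)) := by
  have hk0 : (0 : ℝ) < k := by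
    have : (2 : ℝ) ≤ k := by exact_mod_cast hk
    linarith
  have hik : i < k := lt_of_lt_of_le hij hjk
  have hyx : ypt ε k i ≤ xpt ε k j := by
    rcases lt_or_eq_of_le hjk with hjlt | hjeq
    · have hcast : (i : ℝ) + 1 ≤ (j : ℝ) := by exact_mod_cast hij
      unfold ypt xpt
      rw [if_pos hik, if_pos hjlt, ← add_div, div_le_div_iff_of_pos_right hk0]
      nlinarith
    · have hik2 : (i : ℝ) ≤ (k : ℝ) - 2 := by
        have h2 : i + 2 ≤ k := by omega
        have := (Nat.cast_le (α := ℝ)).2 h2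
        push_cast at this
        linarith
      rw [hjeq]
      unfold ypt xpt
      rw [if_pos hik, if_neg (lt_irrefl k), ← add_div, le_sub_iff_add_le,
        ← add_div, div_le_one hk0]
      nlinarith [mul_nonneg (by linarith : (0:ℝ) ≤ (k:ℝ) - 2 - i) (by linarith : (0:ℝ) ≤ 1 + ε)]
  rw [Set.Ioo_disjoint_Ioo]
  exact le_trans (min_le_left _ _) (le_trans hyx (le_max_right _ _))

theorem stmt_6 (k S : ℕ) (ε : ℝ) (hk : 2 ≤ k) (hkS : k ≤ S)
    (hε0 : 0 < ε) (hεS : ε ≤ 1 / (S : ℝ) ^ 2) :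
    (∀ i j : ℕ, 1 ≤ i → i ≤ k → 1 ≤ j → j ≤ k → i ≠ j →
      ¬((i = k - 1 ∧ j = k) ∨ (i = k ∧ j = k - 1)) →
      Disjoint (Set.Ioo (xpt ε k i) (ypt ε k i)) (Set.Ioo (xpt ε k j) (ypt ε k j))) ∧
    ¬ Disjoint (Set.Ioo (xpt ε k (k - 1)) (ypt ε k (k - 1)))
        (Set.Ioo (xpt ε k k) (ypt ε k k)) := by
  have hS2 : (2 : ℝ) ≤ S := by exact_mod_cast le_trans hk hkS
  have hS0 : (0 : ℝ) < S := by linarith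
  have hkSR : (k : ℝ) ≤ S := by exact_mod_cast hkS
  have hkε : (k : ℝ) * ε < 1 := by
    have h1 : (k : ℝ) * ε ≤ (S : ℝ) * (1 / (S : ℝ) ^ 2) := by
      apply mul_le_mul hkSR hεS hε0.le hS0.le
    have h2 : (S : ℝ) * (1 / (S : ℝ) ^ 2) = 1 / S := by field_simp
    have h3 : 1 / (S : ℝ) < 1 := by rw [div_lt_one hS0]; linarith
    linarith [h2 ▸ h1]
  have hk2 : (2 : ℝ) ≤ k := by exact_mod_cast hk
  have hk0 : (0 : ℝ) < k := by linarith
  constructor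
  · intro i j h1i hik h1j hjk hne hpair
    push_neg at hpair
    rcases lt_or_gt_of_ne hne with h | h
    · exact aux_disj k ε hk hε0 hkε i j h1i h hjk (fun ⟨a, b⟩ => hpair.1 a b)
    · exact (aux_disj k ε hk hε0 hkε j i h1j h hik (fun ⟨a, b⟩ => hpair.2 b a)).symm
  · rw [Set.not_disjoint_iff]
    have hcast : ((k - 1 : ℕ) : ℝ) = (k : ℝ) - 1 := by
      have := (Nat.cast_le (α := ℝ)).2 hk
      push_cast [Nat.cast_sub (by omega : 1 ≤ k)]
      ring
    have hx1 : xpt ε k (k - 1) = ((k : ℝ) - 2) * (1 + ε) / k := by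
      unfold xpt; rw [if_pos (by omega : k - 1 < k), hcast]; ring_nf
    have hy1 : ypt ε k (k - 1) = ((k : ℝ) - 1) * (1 + ε) / k := by
      unfold ypt; rw [hx1, ← add_div]; ring_nf
    have hx2 : xpt ε k k = 1 - (1 + ε) / k := by
      unfold xpt; rw [if_neg (lt_irrefl k)]
    have hy2 : ypt ε k k = 1 := by
      unfold ypt; rw [hx2]; ring
    refine ⟨1 + ε / 2 - (1 + ε) / k, ⟨?_, ?_⟩, ⟨?_, ?_⟩⟩
    · rw [hx1, div_lt_iff₀ hk0]
      have hc : (1 + ε) / (k : ℝ) * k = 1 + ε := div_mul_cancel₀ _ hk0.ne'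
      nlinarith
    · rw [hy1, lt_div_iff₀ hk0]
      have hc : (1 + ε) / (k : ℝ) * k = 1 + ε := div_mul_cancel₀ _ hk0.ne'
      nlinarith
    · rw [hx2]
      have : (0 : ℝ) < ε / 2 := by linarith
      linarith
    · rw [hy2]
      have h4 : ε / 2 < (1 + ε) / k := by
        rw [div_lt_div_iff₀ (by norm_num) hk0]
        nlinarith
      linarith
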